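/- As ε → 0⁺, the integral A(-ε) = -2π ∫₀^{1/2 - ε} r tan(π r) dr satisfies exp(A(-ε)) ~ 2πε; more precisely, A(-ε) = log(2πε) + o(1) as ε → 0⁺. -/

import Mathlib

open Real MeasureTheory intervalIntegral Set Filter

-- log is interval integrable on [0, b]
lemma my_log_intble {b : ℝ} (hb : 0 < b) : IntervalIntegrable Real.log volume 0 b := by
  rw [intervalIntegrable_iff_integrableOn_Ioc_of_le hb.le]
  have hg : IntegrableOn (fun x : ℝ => 2 * x ^ (-(1/2) : ℝ) + |Real.log b|) (Ioc 0 b) volume := by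
    apply Integrable.add
    · have := (intervalIntegrable_rpow' (a := 0) (b := b) (r := -(1/2)) (by norm_num))
      rw [intervalIntegrable_iff_integrableOn_Ioc_of_le hb.le] at this
      exact this.const_mul 2
    · exact integrableOn_const (by simp) (by simp)
  refine hg.mono' Real.measurable_log.aestronglyMeasurable ?_
  rw [ae_restrict_iff' measurableSet_Ioc]
  refine Filter.Eventually.of_forall (fun x hx => ?_)
  obtain ⟨hx0, hxb⟩ := hx
  have hrp : (0:ℝ) < x ^ (-(1/2) : ℝ) := Real.rpow_pos_of_pos hx0 _
  have key : -Real.log x ≤ 2 * x ^ (-(1/2) : ℝ) := by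
    have h1 : Real.log (x ^ (-(1/2) : ℝ)) ≤ x ^ (-(1/2) : ℝ) := by
      have := Real.log_le_sub_one_of_pos hrp
      linarith
    rw [Real.log_rpow hx0] at h1
    linarith
  rcases le_or_gt x 1 with h1 | h1
  · have : Real.log x ≤ 0 := Real.log_nonpos hx0.le h1
    rw [Real.norm_eq_abs, abs_of_nonpos this]
    nlinarith [abs_nonneg (Real.log b)]
  · have hlx : 0 ≤ Real.log x := Real.log_nonneg h1.le
    rw [Real.norm_eq_abs, abs_of_nonneg hlx]
    have : Real.log x ≤ Real.log b := Real.log_le_log hx0 hxb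
    have := le_abs_self (Real.log b)
    linarith

lemma my_logsin_intble : IntervalIntegrable (fun x => Real.log (Real.sin x)) volume 0 (π/2) := by
  have hpi2 : (0:ℝ) < π/2 := by positivity
  rw [intervalIntegrable_iff_integrableOn_Ioc_of_le hpi2.le]
  have hg : IntegrableOn (fun x : ℝ => Real.log (π/2) - Real.log x) (Ioc 0 (π/2)) volume := by
    have := (_root_.intervalIntegrable_const (c := Real.log (π/2)) (a := 0) (b := π/2)
      (μ := volume)).sub (my_log_intble hpi2)
    rwa [intervalIntegrable_iff_integrableOn_Ioc_of_le hpi2.le] at this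
  refine hg.mono' ((Real.measurable_log.comp Real.measurable_sin).aestronglyMeasurable) ?_
  rw [ae_restrict_iff' measurableSet_Ioc]
  refine Filter.Eventually.of_forall (fun x hx => ?_)
  obtain ⟨hx0, hxb⟩ := hx
  have hsin_pos : 0 < Real.sin x := Real.sin_pos_of_pos_of_lt_pi hx0 (by linarith [Real.pi_pos])
  have hsin_le : Real.sin x ≤ 1 := Real.sin_le_one x
  have hlow : 2/π * x ≤ Real.sin x := Real.mul_le_sin hx0.le hxb
  have h2 : 0 < 2/π * x := by positivity
  have hlog_le : Real.log (Real.sin x) ≤ 0 := Real.log_nonpos hsin_pos.le hsin_le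
  rw [Real.norm_eq_abs, abs_of_nonpos hlog_le]
  have : Real.log (2/π * x) ≤ Real.log (Real.sin x) := Real.log_le_log h2 hlow
  rw [Real.log_mul (by positivity) (ne_of_gt hx0), Real.log_div (by norm_num) (by positivity)] at this
  have hlp : Real.log (π/2) = Real.log π - Real.log 2 := Real.log_div (by positivity) (by norm_num)
  linarith

lemma my_logsin_intble_pi : IntervalIntegrable (fun x => Real.log (Real.sin x)) volume 0 π := by
  have h1 := my_logsin_intble
  have h2 : IntervalIntegrable (fun x => Real.log (Real.sin x)) volume (π/2) π := by
    have := h1.comp_sub_left π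
    simp only [Real.sin_pi_sub] at this
    have heq : π - 0 = π := by ring
    have heq2 : π - π/2 = π/2 := by ring
    rw [heq, heq2] at this
    exact this.symm
  exact h1.trans h2

lemma my_logcos_intble : IntervalIntegrable (fun x => Real.log (Real.cos x)) volume 0 (π/2) := by
  have := my_logsin_intble.comp_sub_left (π/2)
  simp only [Real.sin_pi_div_two_sub] at this
  have heq : π/2 - 0 = π/2 := by ring
  have heq2 : π/2 - π/2 = 0 := by ring
  rw [heq, heq2] at this
  exact this.symm

lemma my_integral_logsin : ∫ x in (0:ℝ)..(π/2), Real.log (Real.sin x) = -(π/2) * Real.log 2 := by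
  set I := ∫ x in (0:ℝ)..(π/2), Real.log (Real.sin x) with hI
  -- second half equals I
  have hsecond : ∫ x in (π/2)..π, Real.log (Real.sin x) = I := by
    have := integral_comp_sub_left (a := π/2) (b := π) (fun x => Real.log (Real.sin x)) π
    simp only [Real.sin_pi_sub] at this
    rw [show π - π = 0 by ring, show π - π/2 = π/2 by ring] at this
    exact this
  have hsplit : ∫ x in (0:ℝ)..π, Real.log (Real.sin x) = 2 * I := by
    have h2 : IntervalIntegrable (fun x => Real.log (Real.sin x)) volume (π/2) π :=
      my_logsin_intble_pi.mono_set (by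
        rw [Set.uIcc_of_le (by linarith [Real.pi_pos] : (π/2:ℝ) ≤ π),
            Set.uIcc_of_le Real.pi_pos.le]
        exact Set.Icc_subset_Icc (by positivity) le_rfl)
    rw [← integral_add_adjacent_intervals my_logsin_intble h2, hsecond]
    ring
  -- substitution x = 2u
  have hcomp : ∫ u in (0:ℝ)..(π/2), Real.log (Real.sin (2*u))
      = 2⁻¹ * ∫ x in (0:ℝ)..π, Real.log (Real.sin x) := by
    have := integral_comp_mul_left (a := 0) (b := π/2) (c := 2)
      (fun x => Real.log (Real.sin x)) (by norm_num)
    rw [show (2:ℝ) * 0 = 0 by ring, show (2:ℝ) * (π/2) = π by ring] at this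
    simpa using this
  -- expand log sin(2u)
  have hcongr : ∫ u in (0:ℝ)..(π/2), Real.log (Real.sin (2*u))
      = ∫ u in (0:ℝ)..(π/2), (Real.log 2 + Real.log (Real.sin u) + Real.log (Real.cos u)) := by
    apply intervalIntegral.integral_congr_ae
    have hne : ∀ᵐ x : ℝ, x ≠ π/2 := by
      rw [ae_iff]
      simp only [not_not]
      have : {a : ℝ | a = π/2} = {π/2} := by ext x; simp
      rw [this]
      exact Real.volume_singleton
    filter_upwards [hne] with x hx hmem
    rw [Set.uIoc_of_le (by positivity : (0:ℝ) ≤ π/2)] at hmem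
    obtain ⟨hx0, hxle⟩ := hmem
    have hxlt : x < π/2 := lt_of_le_of_ne hxle hx
    have hs : 0 < Real.sin x := Real.sin_pos_of_pos_of_lt_pi hx0 (by linarith [Real.pi_pos])
    have hc : 0 < Real.cos x := Real.cos_pos_of_mem_Ioo ⟨by linarith [Real.pi_pos], hxlt⟩
    rw [Real.sin_two_mul, Real.log_mul (by positivity) (ne_of_gt hc),
        Real.log_mul (by norm_num) (ne_of_gt hs)]
  have hcos : ∫ u in (0:ℝ)..(π/2), Real.log (Real.cos u) = I := by
    have := integral_comp_sub_left (a := 0) (b := π/2) (fun x => Real.log (Real.sin x)) (π/2)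
    simp only [Real.sin_pi_div_two_sub] at this
    rw [show π/2 - π/2 = 0 by ring, show π/2 - 0 = π/2 by ring] at this
    exact this
  have hsum : ∫ u in (0:ℝ)..(π/2), (Real.log 2 + Real.log (Real.sin u) + Real.log (Real.cos u))
      = (π/2) * Real.log 2 + I + I := by
    rw [integral_add (_root_.intervalIntegrable_const.add my_logsin_intble) my_logcos_intble,
        integral_add _root_.intervalIntegrable_const my_logsin_intble, hcos]
    simp [mul_comm]
    rfl
  have : 2 * I = 2⁻¹ * (2 * I) * 2 := by ring
  have key : (π/2) * Real.log 2 + I + I = 2⁻¹ * (2 * I) := by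
    rw [← hsum, ← hcongr, hcomp, hsplit]
  have : I = -(π/2) * Real.log 2 := by linarith
  exact this

lemma my_integral_logcos : ∫ x in (0:ℝ)..(π/2), Real.log (Real.cos x) = -(π/2) * Real.log 2 := by
  have := integral_comp_sub_left (a := 0) (b := π/2) (fun x => Real.log (Real.sin x)) (π/2)
  simp only [Real.sin_pi_div_two_sub] at this
  rw [show π/2 - π/2 = 0 by ring, show π/2 - 0 = π/2 by ring] at this
  rw [this, my_integral_logsin]

lemma my_logcos_pi_intble : IntervalIntegrable (fun r => Real.log (Real.cos (π * r))) volume 0 (1/2) := by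
  have := my_logcos_intble.comp_mul_left (c := π) (by simp) (by simp)
  rw [show (0:ℝ)/π = 0 by ring, show (π/2)/π = 1/2 by field_simp] at this
  exact this

lemma my_integral_logcos_pi : ∫ r in (0:ℝ)..(1/2), Real.log (Real.cos (π * r)) = -(1/2) * Real.log 2 := by
  have := integral_comp_mul_left (a := 0) (b := 1/2) (c := π)
    (fun x => Real.log (Real.cos x)) Real.pi_ne_zero
  rw [show π * 0 = 0 by ring, show π * (1/2) = π/2 by ring] at this
  rw [this, my_integral_logcos, smul_eq_mul]
  field_simp

-- integration by parts identity
lemma my_ibp {x : ℝ} (hx0 : 0 ≤ x) (hx : x < 1/2) :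
    ∫ r in (0:ℝ)..x, r * Real.tan (π * r)
      = x * (-(1/π) * Real.log (Real.cos (π * x)))
        - ∫ r in (0:ℝ)..x, (-(1/π) * Real.log (Real.cos (π * r))) := by
  have hcos : ∀ r ∈ Set.uIcc (0:ℝ) x, 0 < Real.cos (π * r) := by
    intro r hr
    rw [Set.uIcc_of_le hx0] at hr
    obtain ⟨h1, h2⟩ := hr
    apply Real.cos_pos_of_mem_Ioo
    constructor
    · nlinarith [Real.pi_pos]
    · nlinarith [Real.pi_pos]
  have hv : ∀ r ∈ Set.uIcc (0:ℝ) x,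
      HasDerivAt (fun r => -(1/π) * Real.log (Real.cos (π * r))) (Real.tan (π * r)) r := by
    intro r hr
    have hc := hcos r hr
    have h1 : HasDerivAt (fun r : ℝ => π * r) π r := by
      simpa using (hasDerivAt_id r).const_mul π
    have h2 : HasDerivAt (fun r : ℝ => Real.cos (π * r)) (-Real.sin (π * r) * π) r :=
      (Real.hasDerivAt_cos (π * r)).comp r h1
    have h3 : HasDerivAt (fun r : ℝ => Real.log (Real.cos (π * r)))
        ((-Real.sin (π * r) * π) / Real.cos (π * r)) r := h2.log (ne_of_gt hc)
    have h4 := h3.const_mul (-(1/π))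
    refine h4.congr_deriv ?_
    rw [Real.tan_eq_sin_div_cos]
    field_simp
  have hu : ∀ r ∈ Set.uIcc (0:ℝ) x, HasDerivAt (fun r : ℝ => r) 1 r := fun r _ => hasDerivAt_id r
  have hv' : IntervalIntegrable (fun r => Real.tan (π * r)) volume 0 x := by
    apply ContinuousOn.intervalIntegrable
    apply ContinuousOn.mono (s := Set.uIcc 0 x)
    · intro r hr
      have : ContinuousAt (fun r => Real.tan (π * r)) r :=
        ContinuousAt.comp (g := Real.tan) (f := fun r : ℝ => π * r)
          (Real.continuousAt_tan.2 (ne_of_gt (hcos r hr)))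
          ((continuous_const.mul continuous_id).continuousAt)
      exact this.continuousWithinAt
    · exact le_rfl
  have := intervalIntegral.integral_mul_deriv_eq_deriv_mul hu hv
    (_root_.intervalIntegrable_const (c := (1:ℝ))) hv'
  simp only [one_mul] at this
  rw [this]
  simp

theorem ruelle_integral_asymptotics :
    Filter.Tendsto (fun ε : ℝ =>
        (-2 * Real.pi * ∫ r in (0 : ℝ)..(1 / 2 - ε), r * Real.tan (Real.pi * r)) -
          Real.log (2 * Real.pi * ε))
      (nhdsWithin 0 (Set.Ioi 0)) (nhds 0) := by
  have hmemIoo : Set.Ioo (0:ℝ) (1/2) ∈ nhdsWithin 0 (Set.Ioi 0) :=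
    Ioo_mem_nhdsGT_of_mem ⟨le_refl 0, by norm_num⟩
  -- T1 : log sin(πε) - log(πε) → 0
  have hslope : Tendsto (fun x : ℝ => Real.sin x / x) (nhdsWithin 0 {(0:ℝ)}ᶜ) (nhds 1) := by
    have h := Real.hasDerivAt_sin 0
    rw [hasDerivAt_iff_tendsto_slope] at h
    simp only [slope_fun_def, Real.sin_zero, sub_zero, Real.cos_zero] at h
    refine h.congr fun x => ?_
    simp only [vsub_eq_sub, sub_zero, smul_eq_mul]
    rw [div_eq_inv_mul]
  have hmap : Tendsto (fun ε : ℝ => π * ε) (nhdsWithin 0 (Set.Ioi 0)) (nhdsWithin 0 {(0:ℝ)}ᶜ) := by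
    rw [tendsto_nhdsWithin_iff]
    constructor
    · have : Tendsto (fun ε : ℝ => π * ε) (nhds 0) (nhds (π * 0)) :=
        (continuous_const.mul continuous_id).tendsto 0
      rw [mul_zero] at this
      exact this.mono_left nhdsWithin_le_nhds
    · filter_upwards [self_mem_nhdsWithin] with ε hε
      have h0 : (0:ℝ) < ε := hε
      simp only [Set.mem_compl_iff, Set.mem_singleton_iff]
      positivity
  have hT1 : Tendsto (fun ε : ℝ => Real.log (Real.sin (π*ε)) - Real.log (π*ε))
      (nhdsWithin 0 (Set.Ioi 0)) (nhds 0) := by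
    have h1 : Tendsto (fun ε : ℝ => Real.log (Real.sin (π*ε) / (π*ε)))
        (nhdsWithin 0 (Set.Ioi 0)) (nhds 0) := by
      have := ((Real.continuousAt_log one_ne_zero).tendsto.comp (hslope.comp hmap))
      rwa [Real.log_one] at this
    refine h1.congr' ?_
    filter_upwards [hmemIoo] with ε hε
    have hε0 : (0:ℝ) < ε := hε.1
    have hsin : 0 < Real.sin (π * ε) := by
      apply Real.sin_pos_of_pos_of_lt_pi
      · positivity
      · nlinarith [Real.pi_pos, hε.2]
    rw [Real.log_div (ne_of_gt hsin) (by positivity)]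
  -- hid : ε → 0
  have hid : Tendsto (fun ε : ℝ => ε) (nhdsWithin 0 (Set.Ioi 0)) (nhds 0) :=
    tendsto_id.mono_left nhdsWithin_le_nhds
  -- ε log ε → 0
  have hxlogx : Tendsto (fun ε : ℝ => ε * Real.log ε) (nhdsWithin 0 (Set.Ioi 0)) (nhds 0) := by
    have := tendsto_log_mul_rpow_nhdsGT_zero (r := 1) one_pos
    refine (this.congr' ?_)
    filter_upwards [self_mem_nhdsWithin] with ε hε
    have h0 : (0:ℝ) < ε := hε
    rw [Real.rpow_one, mul_comm]
  -- T2 : ε * log sin(πε) → 0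
  have hT2 : Tendsto (fun ε : ℝ => ε * Real.log (Real.sin (π*ε)))
      (nhdsWithin 0 (Set.Ioi 0)) (nhds 0) := by
    have hsum : Tendsto (fun ε : ℝ =>
        ε * (Real.log (Real.sin (π*ε)) - Real.log (π*ε)) + ε * Real.log π + ε * Real.log ε)
        (nhdsWithin 0 (Set.Ioi 0)) (nhds (0 * 0 + 0 * Real.log π + 0)) :=
      ((hid.mul hT1).add (hid.mul_const (Real.log π))).add hxlogx
    rw [show (0:ℝ) * 0 + 0 * Real.log π + 0 = 0 by ring] at hsum
    refine hsum.congr' ?_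
    filter_upwards [hmemIoo] with ε hε
    have hε0 : (0:ℝ) < ε := hε.1
    rw [Real.log_mul Real.pi_ne_zero (ne_of_gt hε0)]
    ring
  -- T3 : integral continuity
  have hT3 : Tendsto (fun ε : ℝ => ∫ r in (0:ℝ)..(1/2 - ε), Real.log (Real.cos (π * r)))
      (nhdsWithin 0 (Set.Ioi 0)) (nhds (-(1/2) * Real.log 2)) := by
    have hcont : ContinuousWithinAt (fun b => ∫ r in (0:ℝ)..b, Real.log (Real.cos (π * r)))
        (Set.Icc 0 (1/2)) (1/2) := by
      apply intervalIntegral.continuousWithinAt_primitive (Real.volume_singleton)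
      rw [min_self, max_eq_right (by norm_num : (0:ℝ) ≤ 1/2)]
      exact my_logcos_pi_intble
    have hmap2 : Tendsto (fun ε : ℝ => 1/2 - ε) (nhdsWithin 0 (Set.Ioi 0))
        (nhdsWithin (1/2) (Set.Icc 0 (1/2))) := by
      rw [tendsto_nhdsWithin_iff]
      constructor
      · have : Tendsto (fun ε : ℝ => 1/2 - ε) (nhds 0) (nhds (1/2 - 0)) :=
          (continuous_const.sub continuous_id).tendsto 0
        rw [sub_zero] at this
        exact this.mono_left nhdsWithin_le_nhds
      · filter_upwards [hmemIoo] with ε hε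
        exact ⟨by linarith [hε.2], by linarith [hε.1]⟩
    have := hcont.tendsto.comp hmap2
    rwa [my_integral_logcos_pi] at this
  -- combine
  have hfinal : Tendsto (fun ε : ℝ =>
      (Real.log (Real.sin (π*ε)) - Real.log (π*ε))
        - 2 * (ε * Real.log (Real.sin (π*ε)))
        + (-(Real.log 2) - 2 * ∫ r in (0:ℝ)..(1/2 - ε), Real.log (Real.cos (π * r))))
      (nhdsWithin 0 (Set.Ioi 0))
      (nhds (0 - 2*0 + (-(Real.log 2) - 2 * (-(1/2) * Real.log 2)))) :=
    (hT1.sub (hT2.const_mul 2)).add (tendsto_const_nhds.sub (hT3.const_mul 2))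
  rw [show (0:ℝ) - 2*0 + (-(Real.log 2) - 2 * (-(1/2) * Real.log 2)) = 0 by ring] at hfinal
  refine hfinal.congr' ?_
  filter_upwards [hmemIoo] with ε hε
  have hε0 : (0:ℝ) < ε := hε.1
  have hx0 : (0:ℝ) ≤ 1/2 - ε := by linarith [hε.2]
  have hx : (1:ℝ)/2 - ε < 1/2 := by linarith
  rw [my_ibp hx0 hx]
  rw [intervalIntegral.integral_const_mul]
  rw [show π * (1/2 - ε) = π/2 - π*ε by ring, Real.cos_pi_div_two_sub]
  rw [Real.log_mul Real.pi_ne_zero (ne_of_gt hε0),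
      Real.log_mul (by positivity : (2*π:ℝ) ≠ 0) (ne_of_gt hε0),
      Real.log_mul (by norm_num : (2:ℝ) ≠ 0) Real.pi_ne_zero]
  field_simp
  ring
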